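/- Let V(f) ⊂ P^r be a hypersurface, let p be a point of V(f), and suppose there exist s linearly independent hyperplanes H_1,...,H_s through p such that for each i the restriction of f to H_i has multiplicity at least s at p. Then f has multiplicity at least s at p (i.e., all terms of the Taylor expansion of f at p of degree less than s vanish). -/

import Mathlib

open MvPolynomial

lemma coeff_subst_zero_aux {k : Type*} [CommRing k] {n : ℕ} (i : Fin n)
    (f : MvPolynomial (Fin n) k) (d : Fin n →₀ ℕ) (hd : d i = 0) :
    MvPolynomial.coeff d
      (MvPolynomial.aeval
        (fun j : Fin n => if j = i then (0 : MvPolynomial (Fin n) k) else MvPolynomial.X j) f)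
      = MvPolynomial.coeff d f := by
  induction f using MvPolynomial.induction_on' with
  | add p q hp hq => simp only [map_add, coeff_add, hp, hq]
  | monomial u a =>
    rw [aeval_monomial]
    by_cases hu : u i = 0
    · have hprod : (u.prod fun j e =>
          (if j = i then (0 : MvPolynomial (Fin n) k) else X j) ^ e)
          = u.prod fun j e => (X j : MvPolynomial (Fin n) k) ^ e := by
        apply Finsupp.prod_congr
        intro j hj
        have hji : j ≠ i := by
          intro h; subst h
          exact (Finsupp.mem_support_iff.mp hj) hu
        simp [hji]
      rw [hprod, MvPolynomial.algebraMap_eq, ← monomial_eq]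
    · have hun : u ≠ d := by
        intro h; subst h; exact hu hd
      have hzero : (u.prod fun j e =>
          (if j = i then (0 : MvPolynomial (Fin n) k) else X j) ^ e) = 0 := by
        apply Finset.prod_eq_zero (Finsupp.mem_support_iff.mpr hu)
        simp [zero_pow hu]
      rw [hzero, mul_zero, coeff_zero, coeff_monomial, if_neg hun]

/-- If a polynomial `f`, in affine coordinates centered at the point `p` (taken to
be the origin), restricts to each of the `s` linearly independent coordinate
hyperplanes `x_i = 0` (`i < s`) with multiplicity at least `s` at the origin, then
`f` itself has multiplicity at least `s` at the origin: all homogeneous components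
of `f` of degree less than `s` vanish. -/
theorem mult_ge_of_hyperplane_sections {k : Type*} [Field k] [IsAlgClosed k] [CharZero k]
    {n s : ℕ} (hs : s ≤ n) (f : MvPolynomial (Fin n) k)
    (hyp : ∀ i : Fin n, (i : ℕ) < s → ∀ m : ℕ, m < s →
      MvPolynomial.homogeneousComponent m
        (MvPolynomial.aeval
          (fun j : Fin n => if j = i then (0 : MvPolynomial (Fin n) k) else MvPolynomial.X j) f) = 0) :
    ∀ m : ℕ, m < s → MvPolynomial.homogeneousComponent m f = 0 := by
  intro m hm
  ext d
  rw [coeff_homogeneousComponent, coeff_zero]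
  split_ifs with hdeg
  · -- d has degree m < s, so some coordinate i < s is missing from d
    have hcard : d.support.card ≤ m := by
      calc d.support.card = ∑ i ∈ d.support, 1 := by simp
        _ ≤ ∑ i ∈ d.support, d i := Finset.sum_le_sum
            (fun i hi => Nat.one_le_iff_ne_zero.mpr (Finsupp.mem_support_iff.mp hi))
        _ = m := by rw [← hdeg]; rfl
    obtain ⟨i, his, hdi⟩ : ∃ i : Fin n, (i : ℕ) < s ∧ d i = 0 := by
      by_contra h
      push_neg at h
      have hle : s ≤ d.support.card := by
        have := Finset.card_le_card_of_injOn (s := (Finset.univ : Finset (Fin s)))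
          (fun j : Fin s => Fin.castLE hs j)
          (fun j _ => Finsupp.mem_support_iff.mpr (h _ j.isLt))
          (fun a _ b _ hab => Fin.castLE_injective hs hab)
        simpa using this
      omega
    have h0 := hyp i his m hm
    have := coeff_subst_zero_aux i f d hdi
    rw [← this]
    have : MvPolynomial.coeff d
        (MvPolynomial.aeval
          (fun j : Fin n => if j = i then (0 : MvPolynomial (Fin n) k) else MvPolynomial.X j) f)
        = MvPolynomial.coeff d (MvPolynomial.homogeneousComponent m
          (MvPolynomial.aeval
            (fun j : Fin n => if j = i then (0 : MvPolynomial (Fin n) k)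
              else MvPolynomial.X j) f)) := by
      rw [coeff_homogeneousComponent, if_pos hdeg]
    rw [this, h0, coeff_zero]
  · rfl
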